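/- arXiv:1112.3599 — 5 statements merged into one kernel-verified Lean document; each statement's English description precedes it below -/
import Mathlib

section
/- Let K and S be real symmetric positive definite 2×2 matrices. Then the carry-over information satisfies K − K (S + K)⁻¹ K = (det K / det(S + K)) · S + (det S / det(S + K)) · K. -/
open Matrix

/-- **Carry-over information as a weighted sum (2-D case).** For real symmetric
positive definite 2×2 matrices `K` and `S`,
`K - K (S + K)⁻¹ K = (det K / det(S + K)) • S + (det S / det(S + K)) • K`. -/
theorem carryover_weighted_sum_2D
    (K S : Matrix (Fin 2) (Fin 2) ℝ) (hK : K.PosDef) (hS : S.PosDef) :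
    K - K * (S + K)⁻¹ * K =
      (K.det / (S + K).det) • S + (S.det / (S + K).det) • K := by
  have hSK : (S + K).PosDef := hS.add hK
  have hdet : (S + K).det ≠ 0 := ne_of_gt hSK.det_pos
  have hKs : K 1 0 = K 0 1 := by
    have := congrFun (congrFun hK.isHermitian 0) 1
    simpa using this
  have hSs : S 1 0 = S 0 1 := by
    have := congrFun (congrFun hS.isHermitian 0) 1
    simpa using this
  have hd : (S + K).det = (S 0 0 + K 0 0) * (S 1 1 + K 1 1) -
      (S 0 1 + K 0 1) * (S 0 1 + K 0 1) := by
    simp [Matrix.det_fin_two, Matrix.add_apply, hKs, hSs]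
  have hne : (S 0 0 + K 0 0) * (S 1 1 + K 1 1) -
      (S 0 1 + K 0 1) * (S 0 1 + K 0 1) ≠ 0 := hd ▸ hdet
  rw [Matrix.inv_def, Matrix.adjugate_fin_two, Ring.inverse_eq_inv]
  ext i j
  have hx : ((S 0 0 + K 0 0) * (S 1 1 + K 1 1) - (S 0 1 + K 0 1) * (S 0 1 + K 0 1)) *
      ((S 0 0 + K 0 0) * (S 1 1 + K 1 1) - (S 0 1 + K 0 1) * (S 0 1 + K 0 1))⁻¹ = 1 :=
    mul_inv_cancel₀ hne
  fin_cases i <;> fin_cases j <;>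
    simp [Matrix.mul_apply, Fin.sum_univ_two, Matrix.det_fin_two, hd,
      Matrix.add_apply, hKs, hSs, div_eq_mul_inv]
  · linear_combination (-K 0 0) * hx
  · linear_combination (-K 0 1) * hx
  · linear_combination (-K 0 1) * hx
  · linear_combination (-K 1 1) * hx
end

section
/- Fix ψ : ℝ and λ > 0, and let C = λ·R(ψ), a rank-one 2×2 matrix with det C = 0. Let S be a real symmetric positive definite 2×2 matrix. Then the carry-over information is one-dimensional along the direction of movement: C − C (S + C)⁻¹ C = (det S / det(C + S)) · C. -/
open Matrix Real

/-- The unit vector `u_φ = (cos φ, sin φ)ᵀ`. -/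
noncomputable def uvec (φ : ℝ) : Fin 2 → ℝ := ![Real.cos φ, Real.sin φ]

/-- The rank-one matrix `R(φ) = u_φ u_φᵀ`. -/
noncomputable def Rmat (φ : ℝ) : Matrix (Fin 2) (Fin 2) ℝ :=
  Matrix.vecMulVec (uvec φ) (uvec φ)

/-- **One-dimensional carry-over information.** When the temporal information
`C = λ·R(ψ)` is rank one (so `det C = 0`) and `S` is symmetric positive
definite, the carry-over information is one-dimensional along the direction of
movement: `C - C (S + C)⁻¹ C = (det S / det(C + S)) • C`. -/
theorem carryover_rank_one (ψ l : ℝ) (hl : 0 < l)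
    (C : Matrix (Fin 2) (Fin 2) ℝ) (hC : C = l • Rmat ψ)
    (S : Matrix (Fin 2) (Fin 2) ℝ) (hS : S.PosDef) :
    C.det = 0 ∧
      C - C * (S + C)⁻¹ * C = (S.det / (C + S).det) • C := by
  have hCe : ∀ i j, C i j = l * uvec ψ i * uvec ψ j := by
    intro i j
    simp [hC, Rmat, Matrix.vecMulVec_apply, mul_assoc]
  have hCsd : C.PosSemidef := by
    rw [Matrix.posSemidef_iff_dotProduct_mulVec]
    constructor
    · ext i j
      simp [Matrix.conjTranspose_apply, hCe]
      ring
    · intro x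
      have : star x ⬝ᵥ C *ᵥ x = l * (uvec ψ 0 * x 0 + uvec ψ 1 * x 1)^2 := by
        simp [dotProduct, Matrix.mulVec, Fin.sum_univ_two, hCe]
        ring
      rw [this]
      positivity
  have hSC : (S + C).PosDef := hS.add_posSemidef hCsd
  have hdet : (S + C).det ≠ 0 := ne_of_gt hSC.det_pos
  have hdet' : (C + S).det = (S + C).det := by rw [add_comm]
  have hsym : S 1 0 = S 0 1 := by
    have := hS.isHermitian
    simpa [Matrix.conjTranspose_apply] using congrFun (congrFun this.eq 0) 1
  have hpyth : Real.cos ψ ^ 2 + Real.sin ψ ^ 2 = 1 := by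
    rw [add_comm]; exact Real.sin_sq_add_cos_sq ψ
  constructor
  · rw [Matrix.det_fin_two]
    simp [hCe, uvec]; ring
  · have hinv : (S + C)⁻¹ = ((S + C).det)⁻¹ • (S + C).adjugate := by
      rw [Matrix.inv_def, Ring.inverse_eq_inv']
    have hd' : (S 0 0 + l * Real.cos ψ * Real.cos ψ) *
          (S 1 1 + l * Real.sin ψ * Real.sin ψ) -
        (S 0 1 + l * Real.cos ψ * Real.sin ψ) *
          (S 1 0 + l * Real.sin ψ * Real.cos ψ) ≠ 0 := by
      have := hdet
      rw [Matrix.det_fin_two] at this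
      simpa [hCe, uvec] using this
    rw [hinv, hdet']
    ext i j
    fin_cases i <;> fin_cases j <;>
    · simp only [Matrix.sub_apply, Matrix.smul_apply, Matrix.mul_apply,
        Fin.sum_univ_two, Matrix.adjugate_fin_two, Matrix.add_apply,
        Matrix.of_apply, Matrix.cons_val', Matrix.cons_val_zero,
        Matrix.cons_val_one, Matrix.head_cons, Matrix.head_fin_const,
        smul_eq_mul, Matrix.det_fin_two, hCe, uvec, Matrix.cons_val_fin_one, Fin.zero_eta, Fin.mk_one]
      set D := (S 0 0 + l * Real.cos ψ * Real.cos ψ) * (S 1 1 + l * Real.sin ψ * Real.sin ψ) -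
        (S 0 1 + l * Real.cos ψ * Real.sin ψ) * (S 1 0 + l * Real.sin ψ * Real.cos ψ) with hD
      field_simp [hd']
      rw [hD]
      ring_nf
end

section
/- Fix ψ : ℝ and reals λ, ν, μ, η > 0. Let K = λ·R(ψ) + ν·R(ψ + π/2) and S = μ·R(ψ) + η·R(ψ + π/2). Then the carry-over information decouples along the two orthogonal directions: K − K (S + K)⁻¹ K = (λμ/(λ+μ))·R(ψ) + (ην/(η+ν))·R(ψ + π/2). -/
open Matrix Real

lemma Rmat_mul_self (φ : ℝ) : Rmat φ * Rmat φ = Rmat φ := by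
  ext i j
  fin_cases i <;> fin_cases j <;>
    simp [Rmat, uvec, Matrix.vecMulVec_apply, Matrix.mul_apply, Fin.sum_univ_two] <;>
    first
      | linear_combination (Real.cos φ * Real.cos φ) * Real.sin_sq_add_cos_sq φ
      | linear_combination (Real.cos φ * Real.sin φ) * Real.sin_sq_add_cos_sq φ
      | linear_combination (Real.sin φ * Real.sin φ) * Real.sin_sq_add_cos_sq φ

lemma Rmat_mul_perp (φ : ℝ) : Rmat φ * Rmat (φ + π / 2) = 0 := by
  ext i j
  fin_cases i <;> fin_cases j <;>
    simp [Rmat, uvec, Matrix.vecMulVec_apply, Matrix.mul_apply, Fin.sum_univ_two,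
      Real.cos_add, Real.sin_add] <;> ring

lemma Rmat_perp_mul (φ : ℝ) : Rmat (φ + π / 2) * Rmat φ = 0 := by
  ext i j
  fin_cases i <;> fin_cases j <;>
    simp [Rmat, uvec, Matrix.vecMulVec_apply, Matrix.mul_apply, Fin.sum_univ_two,
      Real.cos_add, Real.sin_add] <;> ring

lemma Rmat_add_perp (φ : ℝ) : Rmat φ + Rmat (φ + π / 2) = 1 := by
  ext i j
  fin_cases i <;> fin_cases j <;>
    simp [Rmat, uvec, Matrix.vecMulVec_apply, Matrix.one_apply,
      Real.cos_add, Real.sin_add] <;>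
    first
      | linear_combination Real.sin_sq_add_cos_sq φ
      | ring

/-- **Decoupled carry-over information for aligned eigenvectors.** If
`K = λ·R(ψ) + ν·R(ψ+π/2)` and `S = μ·R(ψ) + η·R(ψ+π/2)` with
`λ, ν, μ, η > 0`, then the carry-over information decouples along the two
orthogonal directions:
`K - K (S + K)⁻¹ K = (λμ/(λ+μ))·R(ψ) + (ην/(η+ν))·R(ψ+π/2)`. -/
theorem carryover_decoupled (ψ l ν μ η : ℝ)
    (hl : 0 < l) (hν : 0 < ν) (hμ : 0 < μ) (hη : 0 < η)
    (K S : Matrix (Fin 2) (Fin 2) ℝ)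
    (hKdef : K = l • Rmat ψ + ν • Rmat (ψ + π / 2))
    (hSdef : S = μ • Rmat ψ + η • Rmat (ψ + π / 2)) :
    K - K * (S + K)⁻¹ * K =
      (l * μ / (l + μ)) • Rmat ψ + (η * ν / (η + ν)) • Rmat (ψ + π / 2) := by
  have hlμ : l + μ ≠ 0 := by positivity
  have hην : η + ν ≠ 0 := by positivity
  have hinv : (S + K)⁻¹ = (1 / (l + μ)) • Rmat ψ + (1 / (η + ν)) • Rmat (ψ + π / 2) := by
    apply Matrix.inv_eq_right_inv
    subst hKdef hSdef
    rw [show (μ • Rmat ψ + η • Rmat (ψ + π / 2)) + (l • Rmat ψ + ν • Rmat (ψ + π / 2))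
        = (μ + l) • Rmat ψ + (η + ν) • Rmat (ψ + π / 2) by module]
    simp only [Matrix.add_mul, Matrix.mul_add, Matrix.smul_mul, Matrix.mul_smul,
      Rmat_mul_self, Rmat_mul_perp, Rmat_perp_mul, smul_zero, add_zero, zero_add,
      smul_smul]
    rw [show (1 / (l + μ) * (μ + l) : ℝ) = 1 by field_simp; ring,
      show (1 / (η + ν) * (η + ν) : ℝ) = 1 by field_simp, one_smul, one_smul,
      Rmat_add_perp]
  rw [hinv]
  subst hKdef hSdef
  simp only [Matrix.add_mul, Matrix.mul_add, Matrix.smul_mul, Matrix.mul_smul,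
    Rmat_mul_self, Rmat_mul_perp, Rmat_perp_mul, smul_zero, add_zero, zero_add,
    smul_smul]
  rw [show l * (1 / (l + μ) * l) = l * l / (l + μ) by ring,
    show ν * (1 / (η + ν) * ν) = ν * ν / (η + ν) by ring,
    show (l * μ / (l + μ) : ℝ) = l - l * l / (l + μ) by field_simp; ring,
    show (η * ν / (η + ν) : ℝ) = ν - ν * ν / (η + ν) by field_simp; ring]
  module
end

section
/- Fix ψ : ℝ and reals λ, ν > 0. Let C = λ·R(ψ), D = ν·R(ψ + π/2), K = C + D, and let S be any real symmetric positive definite 2×2 matrix. Then the carry-over information satisfies K − K (S + K)⁻¹ K = ζ₁·C + ζ₂·D + κ·R(ψ, ψ + π/2), where ζ₁ = (1 + λ·u_ψᵀ (S + D)⁻¹ u_ψ)⁻¹, ζ₂ = (1 + ν·(u_ψ⊥)ᵀ (S + C)⁻¹ u_ψ⊥)⁻¹, and κ = −2λν · u_ψᵀ (S + C + D)⁻¹ u_ψ⊥. -/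
open Matrix Real

/-- The orthogonal unit vector `u_φ⊥ = u_{φ+π/2}`. -/
noncomputable def uvecPerp (φ : ℝ) : Fin 2 → ℝ := uvec (φ + π / 2)

/-- The coupling matrix `R(φ, φ+π/2) = (u_φ (u_φ⊥)ᵀ + u_φ⊥ u_φᵀ)/2`. -/
noncomputable def RmatCross (φ : ℝ) : Matrix (Fin 2) (Fin 2) ℝ :=
  (2:ℝ)⁻¹ • (Matrix.vecMulVec (uvec φ) (uvecPerp φ) +
    Matrix.vecMulVec (uvecPerp φ) (uvec φ))

lemma psd_smul_vecMulVec (v : Fin 2 → ℝ) {t : ℝ} (ht : 0 ≤ t) :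
    (t • Matrix.vecMulVec v v).PosSemidef := by
  rw [Matrix.posSemidef_iff_dotProduct_mulVec]
  constructor
  · ext i j
    simp [Matrix.vecMulVec_apply, IsHermitian, conjTranspose_apply, mul_comm]
  · intro x
    have : star x ⬝ᵥ (t • Matrix.vecMulVec v v) *ᵥ x = t * (v ⬝ᵥ x)^2 := by
      simp [Matrix.mulVec, dotProduct, Fin.sum_univ_two, Matrix.vecMulVec_apply]
      ring
    rw [this]; positivity

set_option maxHeartbeats 4000000 in
/-- **Second geometrical interpretation of the carry-over information.** With
`C = λ·R(ψ)`, `D = ν·R(ψ+π/2)`, `K = C + D`, and `S` symmetric positive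
definite, the carry-over information decomposes as
`K - K (S + K)⁻¹ K = ζ₁·C + ζ₂·D + κ·R(ψ, ψ+π/2)` with
`ζ₁ = (1 + λ·u_ψᵀ (S + D)⁻¹ u_ψ)⁻¹`, `ζ₂ = (1 + ν·(u_ψ⊥)ᵀ (S + C)⁻¹ u_ψ⊥)⁻¹`,
and `κ = −2λν · u_ψᵀ (S + C + D)⁻¹ u_ψ⊥`. -/
theorem carryover_second_interpretation (ψ l ν : ℝ) (hl : 0 < l) (hν : 0 < ν)
    (C D K : Matrix (Fin 2) (Fin 2) ℝ)
    (hC : C = l • Rmat ψ) (hD : D = ν • Rmat (ψ + π / 2)) (hK : K = C + D)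
    (S : Matrix (Fin 2) (Fin 2) ℝ) (hS : S.PosDef) :
    K - K * (S + K)⁻¹ * K =
      (1 + l * (uvec ψ ⬝ᵥ ((S + D)⁻¹ *ᵥ uvec ψ)))⁻¹ • C +
      (1 + ν * (uvecPerp ψ ⬝ᵥ ((S + C)⁻¹ *ᵥ uvecPerp ψ)))⁻¹ • D +
      (-2 * l * ν * (uvec ψ ⬝ᵥ ((S + C + D)⁻¹ *ᵥ uvecPerp ψ))) • RmatCross ψ := by
  have hCpsd : C.PosSemidef := hC ▸ psd_smul_vecMulVec _ hl.le
  have hDpsd : D.PosSemidef := hD ▸ psd_smul_vecMulVec _ hν.le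
  have hSC : (S + C).PosDef := hS.add_posSemidef hCpsd
  have hSD : (S + D).PosDef := hS.add_posSemidef hDpsd
  have hSK : (S + C + D).PosDef := hSC.add_posSemidef hDpsd
  have hdSC : (S + C).det ≠ 0 := hSC.det_pos.ne'
  have hdSD : (S + D).det ≠ 0 := hSD.det_pos.ne'
  have hdSK : (S + C + D).det ≠ 0 := hSK.det_pos.ne'
  have hsym : S 1 0 = S 0 1 := by
    simpa using congrFun (congrFun hS.1 0) 1
  set x := Real.cos ψ with hxdef
  set y := Real.sin ψ with hydef
  set a := S 0 0 with hadef
  set b := S 0 1 with hbdef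
  set c := S 1 1 with hcdef
  have dCeq : (S + l • Matrix.vecMulVec ![x, y] ![x, y]).det =
      (a + l * (x * x)) * (c + l * (y * y)) - (b + l * (x * y)) * (b + l * (x * y)) := by
    simp only [Matrix.det_fin_two, Matrix.add_apply, Matrix.smul_apply,
      Matrix.vecMulVec_apply, smul_eq_mul, hsym,
      Matrix.cons_val', Matrix.cons_val_zero, Matrix.cons_val_one, Matrix.head_cons,
      Matrix.head_fin_const, Matrix.empty_val', Matrix.cons_val_fin_one, Matrix.of_apply]
    ring
  have dDeq : (S + ν • Matrix.vecMulVec ![-y, x] ![-y, x]).det =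
      (a + ν * (y * y)) * (c + ν * (x * x)) - (b - ν * (x * y)) * (b - ν * (x * y)) := by
    simp only [Matrix.det_fin_two, Matrix.add_apply, Matrix.smul_apply,
      Matrix.vecMulVec_apply, smul_eq_mul, hsym,
      Matrix.cons_val', Matrix.cons_val_zero, Matrix.cons_val_one, Matrix.head_cons,
      Matrix.head_fin_const, Matrix.empty_val', Matrix.cons_val_fin_one, Matrix.of_apply]
    ring
  have dKeq : (S + l • Matrix.vecMulVec ![x, y] ![x, y] +
      ν • Matrix.vecMulVec ![-y, x] ![-y, x]).det =
      (a + l * (x * x) + ν * (y * y)) * (c + l * (y * y) + ν * (x * x)) -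
        (b + l * (x * y) - ν * (x * y)) * (b + l * (x * y) - ν * (x * y)) := by
    simp only [Matrix.det_fin_two, Matrix.add_apply, Matrix.smul_apply,
      Matrix.vecMulVec_apply, smul_eq_mul, hsym,
      Matrix.cons_val', Matrix.cons_val_zero, Matrix.cons_val_one, Matrix.head_cons,
      Matrix.head_fin_const, Matrix.empty_val', Matrix.cons_val_fin_one, Matrix.of_apply]
    ring
  subst hK hC hD
  have hdSC' := hdSC
  have hdSD' := hdSD
  have hdSK' := hdSK
  simp only [Rmat, uvec, uvecPerp, Real.cos_add_pi_div_two, Real.sin_add_pi_div_two,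
    ← hxdef, ← hydef] at hdSC' hdSD' hdSK'
  rw [dCeq] at hdSC'
  rw [dDeq] at hdSD'
  rw [dKeq] at hdSK'
  have e1 : (1 + l * (uvec ψ ⬝ᵥ ((S + ν • Rmat (ψ + π / 2))⁻¹ *ᵥ uvec ψ)))⁻¹ =
      (S + ν • Rmat (ψ + π / 2)).det / (S + l • Rmat ψ + ν • Rmat (ψ + π / 2)).det := by
    have key : (1 + l * (uvec ψ ⬝ᵥ ((S + ν • Rmat (ψ + π / 2))⁻¹ *ᵥ uvec ψ))) =
        (S + l • Rmat ψ + ν • Rmat (ψ + π / 2)).det / (S + ν • Rmat (ψ + π / 2)).det := by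
      rw [eq_div_iff hdSD]
      simp only [Matrix.inv_def, Ring.inverse_eq_inv',
      Matrix.adjugate_fin_two, Rmat, RmatCross, uvec, uvecPerp,
      Real.cos_add_pi_div_two, Real.sin_add_pi_div_two,
      Matrix.mulVec, dotProduct, Fin.sum_univ_two, Matrix.vecMulVec_apply,
      Matrix.add_apply, Matrix.smul_apply, Matrix.mul_apply, Matrix.sub_apply, smul_eq_mul,
      Matrix.cons_val', Matrix.cons_val_zero, Matrix.cons_val_one, Matrix.head_cons,
      Matrix.head_fin_const, Matrix.empty_val', Matrix.cons_val_fin_one,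
      Fin.zero_eta, Fin.mk_one, Fin.isValue, Matrix.of_apply]
      rw [dDeq, dKeq]
      simp only [hsym]
      simp only [← hxdef, ← hydef, ← hadef, ← hbdef, ← hcdef]
      generalize hG2 : (a + ν * (y * y)) * (c + ν * (x * x)) - (b - ν * (x * y)) * (b - ν * (x * y)) = G2 at hdSD' ⊢
      field_simp
      subst hG2
      ring
    rw [key, inv_div]
  have e2 : (1 + ν * (uvecPerp ψ ⬝ᵥ ((S + l • Rmat ψ)⁻¹ *ᵥ uvecPerp ψ)))⁻¹ =
      (S + l • Rmat ψ).det / (S + l • Rmat ψ + ν • Rmat (ψ + π / 2)).det := by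
    have key : (1 + ν * (uvecPerp ψ ⬝ᵥ ((S + l • Rmat ψ)⁻¹ *ᵥ uvecPerp ψ))) =
        (S + l • Rmat ψ + ν • Rmat (ψ + π / 2)).det / (S + l • Rmat ψ).det := by
      rw [eq_div_iff hdSC]
      simp only [Matrix.inv_def, Ring.inverse_eq_inv',
      Matrix.adjugate_fin_two, Rmat, RmatCross, uvec, uvecPerp,
      Real.cos_add_pi_div_two, Real.sin_add_pi_div_two,
      Matrix.mulVec, dotProduct, Fin.sum_univ_two, Matrix.vecMulVec_apply,
      Matrix.add_apply, Matrix.smul_apply, Matrix.mul_apply, Matrix.sub_apply, smul_eq_mul,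
      Matrix.cons_val', Matrix.cons_val_zero, Matrix.cons_val_one, Matrix.head_cons,
      Matrix.head_fin_const, Matrix.empty_val', Matrix.cons_val_fin_one,
      Fin.zero_eta, Fin.mk_one, Fin.isValue, Matrix.of_apply]
      rw [dCeq, dKeq]
      simp only [hsym]
      simp only [← hxdef, ← hydef, ← hadef, ← hbdef, ← hcdef]
      generalize hG1 : (a + l * (x * x)) * (c + l * (y * y)) - (b + l * (x * y)) * (b + l * (x * y)) = G1 at hdSC' ⊢
      field_simp
      subst hG1
      ring
    rw [key, inv_div]
  rw [e1, e2]
  simp only [← add_assoc]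
  ext i j
  fin_cases i <;> fin_cases j <;>
  · simp only [Matrix.inv_def, Ring.inverse_eq_inv',
      Matrix.adjugate_fin_two, Rmat, RmatCross, uvec, uvecPerp,
      Real.cos_add_pi_div_two, Real.sin_add_pi_div_two,
      Matrix.mulVec, dotProduct, Fin.sum_univ_two, Matrix.vecMulVec_apply,
      Matrix.add_apply, Matrix.smul_apply, Matrix.mul_apply, Matrix.sub_apply, smul_eq_mul,
      Matrix.cons_val', Matrix.cons_val_zero, Matrix.cons_val_one, Matrix.head_cons,
      Matrix.head_fin_const, Matrix.empty_val', Matrix.cons_val_fin_one,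
      Fin.zero_eta, Fin.mk_one, Fin.isValue, Matrix.of_apply]
    simp only [← hxdef, ← hydef, ← hadef, ← hbdef, ← hcdef, hsym]
    rw [dCeq, dDeq, dKeq]
    generalize hG1 : (a + l * (x * x)) * (c + l * (y * y)) - (b + l * (x * y)) * (b + l * (x * y)) = G1 at hdSC' ⊢
    generalize hG2 : (a + ν * (y * y)) * (c + ν * (x * x)) - (b - ν * (x * y)) * (b - ν * (x * y)) = G2 at hdSD' ⊢
    generalize hG3 : (a + l * (x * x) + ν * (y * y)) * (c + l * (y * y) + ν * (x * x)) -
        (b + l * (x * y) - ν * (x * y)) * (b + l * (x * y) - ν * (x * y)) = G3 at hdSK' ⊢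
    field_simp
    subst hG1 hG2 hG3
    ring
end

section
/- Fix ψ, β : ℝ and reals λ, ν, μ, η > 0. Let C = λ·R(ψ), D = ν·R(ψ + π/2), and S = μ·R(β) + η·R(β + π/2). Then the coupling coefficient of the carry-over information satisfies −2λν · u_ψᵀ (S + C + D)⁻¹ u_ψ⊥ = λν (η − μ) sin(2(ψ − β)) / det(S + C + D). -/
open Matrix Real

/-- **Coupling coefficient of the carry-over information (2-D case).** With
`C = λ·R(ψ)`, `D = ν·R(ψ+π/2)`, and `S = μ·R(β) + η·R(β+π/2)`,
`−2λν · u_ψᵀ (S + C + D)⁻¹ u_ψ⊥ = λν (η − μ) sin(2(ψ − β)) / det(S + C + D)`. -/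
theorem carryover_coupling_coefficient (ψ β l ν μ η : ℝ)
    (hl : 0 < l) (hν : 0 < ν) (hμ : 0 < μ) (hη : 0 < η)
    (C D S : Matrix (Fin 2) (Fin 2) ℝ)
    (hC : C = l • Rmat ψ) (hD : D = ν • Rmat (ψ + π / 2))
    (hS : S = μ • Rmat β + η • Rmat (β + π / 2)) :
    -2 * l * ν * (uvec ψ ⬝ᵥ ((S + C + D)⁻¹ *ᵥ uvecPerp ψ)) =
      l * ν * (η - μ) * Real.sin (2 * (ψ - β)) / (S + C + D).det := by
  subst hC hD hS
  set c := Real.cos ψ with hc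
  set s := Real.sin ψ with hs
  set cb := Real.cos β with hcb
  set sb := Real.sin β with hsb
  have hp1 : c ^ 2 + s ^ 2 = 1 := by rw [hc, hs]; exact Real.cos_sq_add_sin_sq ψ
  have hp2 : cb ^ 2 + sb ^ 2 = 1 := by rw [hcb, hsb]; exact Real.cos_sq_add_sin_sq β
  have hA : (μ • Rmat β + η • Rmat (β + π / 2)) + l • Rmat ψ + ν • Rmat (ψ + π / 2)
      = !![μ*cb^2 + η*sb^2 + l*c^2 + ν*s^2, μ*cb*sb - η*sb*cb + l*c*s - ν*s*c;
           μ*cb*sb - η*sb*cb + l*c*s - ν*s*c, μ*sb^2 + η*cb^2 + l*s^2 + ν*c^2] := by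
    ext i j
    fin_cases i <;> fin_cases j <;>
      simp [Rmat, uvec, Matrix.vecMulVec_apply, Real.cos_add_pi_div_two,
        Real.sin_add_pi_div_two, ← hc, ← hs, ← hcb, ← hsb] <;> ring
  rw [hA]
  have hdet : (!![μ*cb^2 + η*sb^2 + l*c^2 + ν*s^2, μ*cb*sb - η*sb*cb + l*c*s - ν*s*c;
           μ*cb*sb - η*sb*cb + l*c*s - ν*s*c, μ*sb^2 + η*cb^2 + l*s^2 + ν*c^2] :
           Matrix (Fin 2) (Fin 2) ℝ).det =
      l*ν + μ*η + (ν*μ + l*η)*(c*cb + s*sb)^2 + (l*μ + ν*η)*(s*cb - c*sb)^2 := by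
    rw [Matrix.det_fin_two_of]
    linear_combination (l*ν*(1 + s^2 + c^2)) * hp1 + (μ*η*(1 + sb^2 + cb^2)) * hp2
  have hdetpos : 0 < (!![μ*cb^2 + η*sb^2 + l*c^2 + ν*s^2, μ*cb*sb - η*sb*cb + l*c*s - ν*s*c;
           μ*cb*sb - η*sb*cb + l*c*s - ν*s*c, μ*sb^2 + η*cb^2 + l*s^2 + ν*c^2] :
           Matrix (Fin 2) (Fin 2) ℝ).det := by
    rw [hdet]
    have := sq_nonneg (c*cb + s*sb)
    have := sq_nonneg (s*cb - c*sb)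
    positivity
  rw [Matrix.inv_def, Ring.inverse_eq_inv']
  rw [Real.sin_two_mul, Real.sin_sub, Real.cos_sub, ← hc, ← hs, ← hcb, ← hsb]
  simp only [Matrix.adjugate_fin_two_of, Matrix.det_fin_two_of, Matrix.mulVec,
    Matrix.smul_apply, dotProduct, Fin.sum_univ_two, uvec, uvecPerp,
    Real.cos_add_pi_div_two, Real.sin_add_pi_div_two, ← hc, ← hs,
    Matrix.cons_val_zero, Matrix.cons_val_one, Matrix.head_cons, smul_eq_mul,
    Matrix.of_apply, Matrix.cons_val', Matrix.head_fin_const, Matrix.empty_val']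
  rw [Matrix.det_fin_two_of] at hdetpos
  field_simp
  ring
end
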